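/- Let a ∈ ℝ, b ∈ ℝ, and x > 0, with a > 0. Define Ψ(a,b;x) = (1/Γ(a))·∫₀^∞ e^{−xt}·t^{a−1}·(1+t)^{b−a−1} dt. Then Ψ(a,b;·) is twice differentiable on (0,∞) and satisfies Kummer's equation x·u''(x) + (b − x)·u'(x) − a·u(x) = 0. -/

import Mathlib

open MeasureTheory Set Filter Real Asymptotics Topology

namespace Stmt14Aux

/-- The basic integrand. -/
noncomputable def K (p q x t : ℝ) : ℝ := Real.exp (-x*t) * t^p * (1+t)^q

lemma tendsto_aux (c p q : ℝ) (hc : 0 < c) :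
    Tendsto (fun t : ℝ => K p q c t) atTop (𝓝 0) := by
  have h1 : Tendsto (fun t : ℝ => t ^ p * Real.exp (-(c/2) * t)) atTop (𝓝 0) :=
    tendsto_rpow_mul_exp_neg_mul_atTop_nhds_zero p (c/2) (by linarith)
  have h2 : Tendsto (fun t : ℝ => (1+t) ^ q * Real.exp (-(c/2) * (1+t))) atTop (𝓝 0) := by
    have := (tendsto_rpow_mul_exp_neg_mul_atTop_nhds_zero q (c/2) (by linarith)).comp
      (tendsto_atTop_add_const_left _ 1 tendsto_id)
    simpa [Function.comp_def] using this
  have h3 : Tendsto (fun t : ℝ =>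
      (t ^ p * Real.exp (-(c/2) * t)) * ((1+t) ^ q * Real.exp (-(c/2) * (1+t)) * Real.exp (c/2)))
      atTop (𝓝 0) := by
    have := h1.mul (h2.mul_const (Real.exp (c/2)))
    simpa using this
  refine h3.congr fun t => ?_
  have he : Real.exp (-(c/2)*t) * (Real.exp (-(c/2)*(1+t)) * Real.exp (c/2)) = Real.exp (-c*t) := by
    rw [← Real.exp_add, ← Real.exp_add]; ring_nf
  rw [K, ← he]; ring

lemma contOn_aux (x p q : ℝ) : ContinuousOn (fun t : ℝ => K p q x t) (Ioi 0) := by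
  apply ContinuousOn.mul
  · apply ContinuousOn.mul
    · exact (Real.continuous_exp.comp (continuous_const.mul continuous_id)).continuousOn
    · exact ContinuousOn.rpow_const continuousOn_id fun t ht => Or.inl (ne_of_gt ht)
  · exact ContinuousOn.rpow_const (continuous_const.add continuous_id).continuousOn
      fun t ht => Or.inl (by have h : (0:ℝ) < t := ht; intro h0; linarith)

lemma contOn_Ici_aux (x p q : ℝ) : ContinuousOn (fun t : ℝ => K p q x t) (Ici 1) :=
  (contOn_aux x p q).mono fun t ht => (lt_of_lt_of_le one_pos ht : (0:ℝ) < t)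

lemma nonneg_aux (x p q : ℝ) {t : ℝ} (ht : 0 < t) : 0 ≤ K p q x t := by
  unfold K; positivity

lemma integrable_aux (x p q : ℝ) (hx : 0 < x) (hp : -1 < p) :
    IntegrableOn (fun t : ℝ => K p q x t) (Ioi 0) := by
  rw [← Ioc_union_Ioi_eq_Ioi (zero_le_one' ℝ), integrableOn_union]
  constructor
  · -- on (0,1]
    have hmono : ∀ t ∈ Ioc (0:ℝ) 1, ‖K p q x t‖ ≤ (1 + 2 ^ q) * t ^ p := by
      intro t ht
      have ht0 : 0 < t := ht.1
      rw [Real.norm_eq_abs, abs_of_nonneg (nonneg_aux x p q ht0)]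
      have h1 : Real.exp (-x*t) ≤ 1 := by
        rw [Real.exp_le_one_iff]; nlinarith
      have h2 : (1+t) ^ q ≤ 1 + 2 ^ q := by
        rcases le_or_gt q 0 with hq | hq
        · have : (1+t) ^ q ≤ 1 ^ q := by
            apply Real.rpow_le_rpow_of_nonpos one_pos (by linarith) hq
          rw [Real.one_rpow] at this
          have : (0:ℝ) ≤ 2 ^ q := by positivity
          linarith [Real.rpow_le_rpow_of_nonpos one_pos (by linarith : (1:ℝ) ≤ 1+t) hq]
        · have : (1+t) ^ q ≤ 2 ^ q := by
            apply Real.rpow_le_rpow (by linarith) (by linarith [ht.2]) hq.le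
          have h0 : (0:ℝ) ≤ 1 := zero_le_one
          linarith
      calc Real.exp (-x*t) * t^p * (1+t)^q ≤ 1 * t^p * (1 + 2^q) := by
            apply mul_le_mul (mul_le_mul h1 le_rfl (by positivity) zero_le_one) h2
              (by positivity) (by positivity)
        _ = (1 + 2^q) * t^p := by ring
    refine Integrable.mono' (g := fun t => (1 + 2 ^ q) * t ^ p) ?_ ?_ ?_
    · apply Integrable.const_mul
      rw [← IntegrableOn, ← intervalIntegrable_iff_integrableOn_Ioc_of_le zero_le_one]
      exact intervalIntegral.intervalIntegrable_rpow' hp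
    · exact ((contOn_aux x p q).mono Ioc_subset_Ioi_self).aestronglyMeasurable measurableSet_Ioc
    · exact (ae_restrict_iff' measurableSet_Ioc).2 (ae_of_all _ hmono)
  · -- on (1,∞)
    apply integrable_of_isBigO_exp_neg (half_pos hx) (contOn_Ici_aux x p q)
    apply IsLittleO.isBigO
    apply isLittleO_of_tendsto
    · intro t h0; exact absurd h0 (Real.exp_ne_zero _)
    · refine (tendsto_aux (x/2) p q (half_pos hx)).congr fun t => ?_
      have he : Real.exp (-(x/2)*t) * Real.exp (-(x/2)*t) = Real.exp (-x*t) := by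
        rw [← Real.exp_add]; ring_nf
      rw [K, K, eq_div_iff (Real.exp_ne_zero _), ← he]; ring


lemma hasDerivAt_J (p q : ℝ) (hp : -1 < p) {x : ℝ} (hx : 0 < x) :
    HasDerivAt (fun y => ∫ t in Ioi (0:ℝ), K p q y t)
      (-∫ t in Ioi (0:ℝ), K (p+1) q x t) x := by
  have key := hasDerivAt_integral_of_dominated_loc_of_deriv_le (μ := volume.restrict (Ioi 0))
    (F := fun y t => K p q y t) (F' := fun y t => -(K (p+1) q y t))
    (x₀ := x) (bound := fun t => K (p+1) q (x/2) t) (s := Metric.ball x (x/2)) (Metric.ball_mem_nhds x (half_pos hx))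
    (Eventually.of_forall fun y =>
      ((contOn_aux y p q).aestronglyMeasurable measurableSet_Ioi))
    (integrable_aux x p q hx hp)
    (((contOn_aux x (p+1) q).aestronglyMeasurable measurableSet_Ioi).neg)
    ?_ (integrable_aux (x/2) (p+1) q (half_pos hx) (by linarith)) ?_
  · simp only [integral_neg] at key
    exact key.2
  · rw [ae_restrict_iff' measurableSet_Ioi]
    refine ae_of_all _ fun t ht y hy => ?_
    have ht0 : (0:ℝ) < t := ht
    have hy2 : x/2 < y := by
      have := abs_lt.1 (mem_ball_iff_norm.1 hy)
      linarith [this.1]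
    rw [norm_neg, Real.norm_eq_abs, abs_of_nonneg (nonneg_aux y (p+1) q ht0)]
    unfold K
    have hexp : Real.exp (-y*t) ≤ Real.exp (-(x/2)*t) := by
      apply Real.exp_le_exp.2; nlinarith
    have h1 : (0:ℝ) ≤ t ^ (p+1) := le_of_lt (Real.rpow_pos_of_pos ht0 _)
    have h2 : (0:ℝ) ≤ (1+t) ^ q := le_of_lt (Real.rpow_pos_of_pos (by linarith) _)
    exact mul_le_mul_of_nonneg_right (mul_le_mul_of_nonneg_right hexp h1) h2
  · rw [ae_restrict_iff' measurableSet_Ioi]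
    refine ae_of_all _ fun t ht y _ => ?_
    have ht0 : (0:ℝ) < t := ht
    have h1 : HasDerivAt (fun y : ℝ => -y*t) (-t) y := by
      simpa using (hasDerivAt_id y).neg.mul_const t
    have hd : HasDerivAt (fun y => K p q y t)
        ((Real.exp (-y*t) * -t) * t^p * (1+t)^q) y :=
      ((h1.exp).mul_const (t^p)).mul_const ((1+t)^q)
    have heq : (Real.exp (-y*t) * -t) * t^p * (1+t)^q = -(K (p+1) q y t) := by
      rw [K, Real.rpow_add_one (ne_of_gt ht0)]; ring
    simpa only [heq] using hd

lemma key_identity (a b x : ℝ) (ha : 0 < a) (hx : 0 < x) :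
    x * (∫ t in Ioi (0:ℝ), K (a-1+1+1) (b-a-1) x t)
      - (b - x) * (∫ t in Ioi (0:ℝ), K (a-1+1) (b-a-1) x t)
      - a * (∫ t in Ioi (0:ℝ), K (a-1) (b-a-1) x t) = 0 := by
  set q : ℝ := b - a - 1 with hq
  set G : ℝ → ℝ := fun t => x * K (a-1+1+1) q x t - (b - x) * K (a-1+1) q x t - a * K (a-1) q x t
    with hG
  have hi2 : IntegrableOn (fun t => K (a-1+1+1) q x t) (Ioi 0) :=
    integrable_aux x _ q hx (by linarith)
  have hi1 : IntegrableOn (fun t => K (a-1+1) q x t) (Ioi 0) :=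
    integrable_aux x _ q hx (by linarith)
  have hi0 : IntegrableOn (fun t => K (a-1) q x t) (Ioi 0) :=
    integrable_aux x _ q hx (by linarith)
  have hGint : IntegrableOn G (Ioi 0) :=
    ((hi2.const_mul x).sub (hi1.const_mul (b-x))).sub (hi0.const_mul a)
  -- the antiderivative
  have hderiv : ∀ t ∈ Ioi (0:ℝ), HasDerivAt (fun t => K a (b-a) x t) (-G t) t := by
    intro t ht
    have ht0 : (0:ℝ) < t := ht
    have h1t : (0:ℝ) < 1 + t := by linarith
    have hexp : HasDerivAt (fun t : ℝ => Real.exp (-x*t)) (Real.exp (-x*t) * -x) t := by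
      have : HasDerivAt (fun t : ℝ => -x*t) (-x) t := by
        simpa using (hasDerivAt_id t).const_mul (-x)
      exact this.exp
    have hpow : HasDerivAt (fun t : ℝ => t ^ a) (a * t^(a-1)) t :=
      Real.hasDerivAt_rpow_const (Or.inl (ne_of_gt ht0))
    have hpow2 : HasDerivAt (fun t : ℝ => (1+t) ^ (b-a)) ((b-a) * (1+t)^(b-a-1) * 1) t := by
      exact (Real.hasDerivAt_rpow_const (p := b-a) (Or.inl (ne_of_gt h1t))).comp t
        ((hasDerivAt_id t).const_add 1)
    have hd := (hexp.mul hpow).mul hpow2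
    have e2 : t^(a-1+1+1) = t^(a-1+1) * t := Real.rpow_add_one (ne_of_gt ht0) _
    have e1 : t^(a-1+1) = t^(a-1) * t := Real.rpow_add_one (ne_of_gt ht0) _
    have ea : t^a = t^(a-1) * t := by rw [← e1]; norm_num
    have e3 : (1+t)^(b-a) = (1+t)^(b-a-1) * (1+t) := by
      have := Real.rpow_add_one (ne_of_gt h1t) (b-a-1)
      rw [sub_add_cancel] at this
      exact this
    have heq : (Real.exp (-x*t) * -x * t^a + Real.exp (-x*t) * (a * t^(a-1))) * (1+t)^(b-a)
        + Real.exp (-x*t) * t^a * ((b-a) * (1+t)^(b-a-1) * 1) = -G t := by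
      simp only [hG, K, hq, e2, e1, ea, e3]
      ring
    show HasDerivAt (fun t => Real.exp (-x*t) * t^a * (1+t)^(b-a)) (-G t) t
    rw [← heq]
    exact hd
  have hcont : ContinuousWithinAt (fun t => K a (b-a) x t) (Ici 0) 0 := by
    apply ContinuousAt.continuousWithinAt
    apply ContinuousAt.mul
    apply ContinuousAt.mul
    · exact (Real.continuous_exp.comp (continuous_const.mul continuous_id)).continuousAt
    · exact Real.continuousAt_rpow_const 0 a (Or.inr ha.le)
    · exact ContinuousAt.rpow_const (continuous_const.add continuous_id).continuousAt
        (Or.inl (by norm_num))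
  have htends : Tendsto (fun t => K a (b-a) x t) atTop (𝓝 0) := tendsto_aux x a (b-a) hx
  have hFTC := integral_Ioi_of_hasDerivAt_of_tendsto hcont hderiv hGint.neg htends
  have hg0 : K a (b-a) x 0 = 0 := by
    simp [K, Real.zero_rpow (ne_of_gt ha)]
  rw [hg0, sub_zero, integral_neg, neg_eq_zero] at hFTC
  have hsplit : ∫ t in Ioi (0:ℝ), G t
      = x * (∫ t in Ioi (0:ℝ), K (a-1+1+1) q x t)
        - (b - x) * (∫ t in Ioi (0:ℝ), K (a-1+1) q x t)
        - a * (∫ t in Ioi (0:ℝ), K (a-1) q x t) := by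
    have hsub12 : Integrable (fun t : ℝ => x * K (a-1+1+1) q x t - (b-x) * K (a-1+1) q x t)
        (volume.restrict (Ioi 0)) := (hi2.const_mul x).sub (hi1.const_mul (b-x))
    simp only [hG]
    rw [integral_sub hsub12 (hi0.const_mul a),
      integral_sub (hi2.const_mul x) (hi1.const_mul (b-x)),
      integral_const_mul, integral_const_mul, integral_const_mul]
  rw [← hsplit]
  exact hFTC

end Stmt14Aux

open Stmt14Aux in
theorem stmt_14 (a b : ℝ) (ha : 0 < a) :
    let Ψ : ℝ → ℝ := fun x => (1 / Real.Gamma a) *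
      ∫ t in Ioi (0 : ℝ), Real.exp (-x * t) * t ^ (a - 1) * (1 + t) ^ (b - a - 1)
    ∀ x : ℝ, 0 < x →
      DifferentiableAt ℝ Ψ x ∧ DifferentiableAt ℝ (deriv Ψ) x ∧
      x * deriv (deriv Ψ) x + (b - x) * deriv Ψ x - a * Ψ x = 0 := by
  intro Ψ x hx
  set C : ℝ := 1 / Real.Gamma a with hC
  set q : ℝ := b - a - 1 with hq
  have hΨderiv : ∀ y : ℝ, 0 < y →
      HasDerivAt Ψ (C * -∫ t in Ioi (0:ℝ), K (a-1+1) q y t) y := by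
    intro y hy
    exact (hasDerivAt_J (a-1) q (by linarith) hy).const_mul C
  have hd1 := hΨderiv x hx
  have hev : deriv Ψ =ᶠ[nhds x] fun y => C * -∫ t in Ioi (0:ℝ), K (a-1+1) q y t := by
    filter_upwards [isOpen_Ioi.mem_nhds hx] with y hy
    exact (hΨderiv y hy).deriv
  have hd2 : HasDerivAt (deriv Ψ) (C * ∫ t in Ioi (0:ℝ), K (a-1+1+1) q x t) x := by
    have h := ((hasDerivAt_J (a-1+1) q (by linarith) hx).neg.const_mul C)
    rw [neg_neg] at h
    exact h.congr_of_eventuallyEq hev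
  refine ⟨hd1.differentiableAt, hd2.differentiableAt, ?_⟩
  have hΨx : Ψ x = C * ∫ t in Ioi (0:ℝ), K (a-1) q x t := rfl
  rw [hd1.deriv, hd2.deriv, hΨx]
  have hk := key_identity a b x ha hx
  rw [← hq] at hk
  linear_combination C * hk
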